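/- arXiv:0809.2947 — 3 statements merged into one kernel-verified Lean document; each statement's English description precedes it below -/
import Mathlib

section
/- An integral domain D is a ∗-CICD if and only if D is completely integrally closed and A^∗ = A^v for all nonzero fractional ideals A of D. -/
open FractionalIdeal

/-- A star operation on an integral domain `D` with fraction field `K`, acting on
fractional ideals: it fixes `D`, is extensive, monotone, idempotent (all on nonzero
ideals), and commutes with multiplication by nonzero principal fractional ideals. -/
structure StarOp (D : Type*) [CommRing D] [IsDomain D] (K : Type*) [Field K]
    [Algebra D K] [IsFractionRing D K] where
  star : FractionalIdeal (nonZeroDivisors D) K → FractionalIdeal (nonZeroDivisors D) K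
  star_one : star 1 = 1
  le_star : ∀ {A}, A ≠ 0 → A ≤ star A
  star_mono : ∀ {A B}, A ≠ 0 → A ≤ B → star A ≤ star B
  star_idem : ∀ {A}, A ≠ 0 → star (star A) = star A
  star_smul : ∀ {A : FractionalIdeal (nonZeroDivisors D) K} (x : K), x ≠ 0 → A ≠ 0 →
    star (spanSingleton (nonZeroDivisors D) x * A) = spanSingleton (nonZeroDivisors D) x * star A

variable {D K : Type*} [CommRing D] [IsDomain D] [Field K] [Algebra D K] [IsFractionRing D K]

private lemma StarOpAux.mul_ne_zero' {A B : FractionalIdeal (nonZeroDivisors D) K}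
    (hA : A ≠ 0) (hB : B ≠ 0) : A * B ≠ 0 := by
  obtain ⟨a, ha0, ha⟩ := FractionalIdeal.exists_ne_zero_mem_isInteger hA
  obtain ⟨b, hb0, hb⟩ := FractionalIdeal.exists_ne_zero_mem_isInteger hB
  intro h
  have hmem := FractionalIdeal.mul_mem_mul ha hb
  rw [h, FractionalIdeal.mem_zero_iff] at hmem
  exact mul_ne_zero (by simpa using (IsFractionRing.to_map_eq_zero_iff (K := K)).not.mpr ha0)
    (by simpa using (IsFractionRing.to_map_eq_zero_iff (K := K)).not.mpr hb0) hmem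

private lemma StarOpAux.inv_ne_zero' {A : FractionalIdeal (nonZeroDivisors D) K}
    (hA : A ≠ 0) : A⁻¹ ≠ 0 := by
  obtain ⟨a, haS, ha⟩ := A.isFractional
  have hx : algebraMap D K a ≠ 0 :=
    IsFractionRing.to_map_ne_zero_of_mem_nonZeroDivisors haS
  have hmem : algebraMap D K a ∈ A⁻¹ := by
    rw [FractionalIdeal.inv_eq, FractionalIdeal.mem_div_iff_of_ne_zero hA]
    intro y hy
    obtain ⟨r, hr⟩ := ha y hy
    rw [FractionalIdeal.mem_one_iff]
    exact ⟨r, by rw [hr, Algebra.smul_def]⟩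
  intro h
  rw [h, FractionalIdeal.mem_zero_iff] at hmem
  exact hx hmem

/-- Submultiplicativity: `A * B^* ≤ (A*B)^*`. -/
private lemma StarOpAux.mul_star_le (s : StarOp D K)
    {A B : FractionalIdeal (nonZeroDivisors D) K} (hA : A ≠ 0) (hB : B ≠ 0) :
    A * s.star B ≤ s.star (A * B) := by
  rw [FractionalIdeal.mul_le]
  intro a ha x hx
  by_cases haz : a = 0
  · simpa [haz] using (s.star (A * B)).zero_mem
  · have hsp : spanSingleton (nonZeroDivisors D) a ≠ 0 :=
      FractionalIdeal.spanSingleton_ne_zero_iff.mpr haz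
    have h2 : spanSingleton (nonZeroDivisors D) a * B ≤ A * B :=
      by gcongr; exact FractionalIdeal.spanSingleton_le_iff_mem.mpr ha
    have h4 : spanSingleton (nonZeroDivisors D) a * s.star B ≤ s.star (A * B) := by
      rw [← s.star_smul a haz hB]
      exact s.star_mono (StarOpAux.mul_ne_zero' hsp hB) h2
    exact h4 (FractionalIdeal.mul_mem_mul
      (FractionalIdeal.mem_spanSingleton_self _ a) hx)

/-- `D` is a `∗`-CICD iff `D` is completely integrally closed and `A^∗ = A^v`
for all nonzero fractional ideals `A`. -/
theorem starCICD_iff_CIC_and_star_eq_v (s : StarOp D K) :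
    (∀ A : FractionalIdeal (nonZeroDivisors D) K, A ≠ 0 → s.star (A * A⁻¹) = 1) ↔
    ((∀ A : FractionalIdeal (nonZeroDivisors D) K, A ≠ 0 → ((A * A⁻¹)⁻¹)⁻¹ = 1) ∧
      (∀ A : FractionalIdeal (nonZeroDivisors D) K, A ≠ 0 → s.star A = (A⁻¹)⁻¹)) := by
  constructor
  · intro H
    have hveq : ∀ A : FractionalIdeal (nonZeroDivisors D) K, A ≠ 0 → s.star A = (A⁻¹)⁻¹ := by
      intro A hA
      have hAinv : A⁻¹ ≠ 0 := StarOpAux.inv_ne_zero' hA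
      apply le_antisymm
      · -- star A ≤ A^v
        rw [FractionalIdeal.inv_eq (I := A⁻¹),
          FractionalIdeal.le_div_iff_mul_le hAinv]
        calc s.star A * A⁻¹ = A⁻¹ * s.star A := mul_comm _ _
          _ ≤ s.star (A⁻¹ * A) := StarOpAux.mul_star_le s hAinv hA
          _ = 1 := by rw [mul_comm]; exact H A hA
      · -- A^v ≤ star A
        have hAv : (A⁻¹)⁻¹ ≠ 0 := StarOpAux.inv_ne_zero' hAinv
        have hle1 : (A⁻¹)⁻¹ * A⁻¹ ≤ 1 := by
          rw [mul_comm, FractionalIdeal.inv_eq (I := A⁻¹)]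
          exact FractionalIdeal.mul_one_div_le_one
        have hprod : A * A⁻¹ ≠ 0 := StarOpAux.mul_ne_zero' hA hAinv
        calc (A⁻¹)⁻¹ = (A⁻¹)⁻¹ * 1 := (mul_one _).symm
          _ = (A⁻¹)⁻¹ * s.star (A * A⁻¹) := by rw [H A hA]
          _ ≤ s.star ((A⁻¹)⁻¹ * (A * A⁻¹)) := StarOpAux.mul_star_le s hAv hprod
          _ ≤ s.star A := by
              apply s.star_mono (StarOpAux.mul_ne_zero' hAv hprod)
              calc (A⁻¹)⁻¹ * (A * A⁻¹) = A * ((A⁻¹)⁻¹ * A⁻¹) := by ring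
                _ ≤ A * 1 := by gcongr
                _ = A := mul_one A
    refine ⟨fun A hA => ?_, hveq⟩
    have hprod : A * A⁻¹ ≠ 0 := StarOpAux.mul_ne_zero' hA (StarOpAux.inv_ne_zero' hA)
    rw [← hveq _ hprod]
    exact H A hA
  · rintro ⟨hCIC, heq⟩ A hA
    have hprod : A * A⁻¹ ≠ 0 := StarOpAux.mul_ne_zero' hA (StarOpAux.inv_ne_zero' hA)
    rw [heq _ hprod]
    exact hCIC A hA
end

section
/- A nonzero fractional ideal H of an integral domain D is ∗-invertible if and only if (A : H)^∗ = (A^∗ : H) = (AH⁻¹)^∗ for all nonzero fractional ideals A of D. -/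
open FractionalIdeal

variable {D K : Type*} [CommRing D] [IsDomain D] [Field K] [Algebra D K] [IsFractionRing D K]

/-- The colon of two nonzero fractional ideals is nonzero. -/
lemma StarOpAux.div_ne_zero {A H : FractionalIdeal (nonZeroDivisors D) K}
    (hA : A ≠ 0) (hH : H ≠ 0) : A / H ≠ 0 := by
  obtain ⟨x, hx0, hxA⟩ := exists_ne_zero_mem_isInteger hA
  obtain ⟨d, hdS, hd⟩ := H.isFractional
  have hd0 : d ≠ 0 := nonZeroDivisors.ne_zero hdS
  set c : K := algebraMap D K x * algebraMap D K d with hc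
  have hc0 : c ≠ 0 := mul_ne_zero
    ((map_ne_zero_iff _ (IsFractionRing.injective D K)).mpr hx0)
    ((map_ne_zero_iff _ (IsFractionRing.injective D K)).mpr hd0)
  have hcmem : c ∈ A / H := by
    rw [mem_div_iff_of_ne_zero hH]
    intro y hy
    obtain ⟨e, he⟩ := hd y hy
    have : c * y = e • algebraMap D K x := by
      rw [hc, Algebra.smul_def, mul_comm (algebraMap D K e), mul_assoc, he, Algebra.smul_def]
    rw [this]
    exact Submodule.smul_mem _ _ hxA
  intro h0
  rw [h0] at hcmem
  exact hc0 ((mem_zero_iff _).mp hcmem)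

lemma StarOpAux.mul_ne_zero'_s6 {I J : FractionalIdeal (nonZeroDivisors D) K}
    (hI : I ≠ 0) (hJ : J ≠ 0) : I * J ≠ 0 := by
  obtain ⟨x, hx0, hx⟩ := exists_ne_zero_mem_isInteger hI
  obtain ⟨y, hy0, hy⟩ := exists_ne_zero_mem_isInteger hJ
  intro h0
  have hm : algebraMap D K x * algebraMap D K y ∈ I * J := mul_mem_mul hx hy
  rw [h0, mem_zero_iff] at hm
  exact mul_ne_zero ((map_ne_zero_iff _ (IsFractionRing.injective D K)).mpr hx0)
    ((map_ne_zero_iff _ (IsFractionRing.injective D K)).mpr hy0) hm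

/-- Key lemma: `A^* B ≤ (A B)^*`. -/
lemma StarOpAux.star_mul_le (s : StarOp D K) {A B : FractionalIdeal (nonZeroDivisors D) K}
    (hA : A ≠ 0) (hB : B ≠ 0) : s.star A * B ≤ s.star (A * B) := by
  rw [mul_le]
  intro a ha b hb
  rcases eq_or_ne b 0 with rfl | hb0
  · rw [mul_zero]; exact zero_mem _
  have h1 : a * b ∈ spanSingleton (nonZeroDivisors D) b * s.star A :=
    mem_singleton_mul.mpr ⟨a, ha, mul_comm a b⟩
  rw [← s.star_smul b hb0 hA] at h1
  have h2 : spanSingleton (nonZeroDivisors D) b * A ≤ A * B := by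
    rw [mul_comm A B]
    exact mul_left_mono (a := A) (spanSingleton_le_iff_mem.mpr hb)
  have hne : spanSingleton (nonZeroDivisors D) b * A ≠ 0 :=
    StarOpAux.mul_ne_zero'_s6 (spanSingleton_ne_zero_iff.mpr hb0) hA
  exact s.star_mono hne h2 h1

/-- A nonzero fractional ideal `H` is `∗`-invertible iff
`(A : H)^∗ = (A^∗ : H) = (AH⁻¹)^∗` for all nonzero fractional ideals `A`. -/
theorem starInvertible_iff_colon (s : StarOp D K) (H : FractionalIdeal (nonZeroDivisors D) K) (hH : H ≠ 0) :
    s.star (H * H⁻¹) = 1 ↔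
    (∀ A : FractionalIdeal (nonZeroDivisors D) K, A ≠ 0 →
      s.star (A / H) = s.star A / H ∧ s.star A / H = s.star (A * H⁻¹)) := by
  have hHinv : H⁻¹ ≠ 0 := StarOpAux.div_ne_zero one_ne_zero hH
  constructor
  · intro hinv A hA
    have hAH : A / H ≠ 0 := StarOpAux.div_ne_zero hA hH
    have hAHinv : A * H⁻¹ ≠ 0 := StarOpAux.mul_ne_zero'_s6 hA hHinv
    have hAstar : s.star A ≠ 0 := fun h =>
      hA (le_antisymm (h ▸ s.le_star hA) (zero_le _))
    have hX : s.star A / H ≠ 0 := StarOpAux.div_ne_zero hAstar hH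
    -- (a) A * H⁻¹ ≤ A / H
    have ha : A * H⁻¹ ≤ A / H := by
      rw [le_div_iff_mul_le hH, mul_assoc]
      calc A * (H⁻¹ * H) ≤ A * 1 := mul_right_mono (a := A) (by rw [mul_comm]; exact mul_one_div_le_one)
        _ = A := mul_one A
    -- (b)
    have hb : s.star (A * H⁻¹) ≤ s.star (A / H) := s.star_mono hAHinv ha
    -- (c) (A/H)^* ≤ A^*/H
    have hdivmul : A / H * H ≤ A := (le_div_iff_mul_le hH).mp le_rfl
    have hdivmulne : A / H * H ≠ 0 := StarOpAux.mul_ne_zero'_s6 hAH hH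
    have hc : s.star (A / H) ≤ s.star A / H := by
      rw [le_div_iff_mul_le hH]
      calc s.star (A / H) * H ≤ s.star (A / H * H) := StarOpAux.star_mul_le s hAH hH
        _ ≤ s.star A := s.star_mono hdivmulne hdivmul
    -- (d) A^*/H ≤ (A H⁻¹)^*
    have hd : s.star A / H ≤ s.star (A * H⁻¹) := by
      have h1 : s.star A / H * H ≤ s.star A := (le_div_iff_mul_le hH).mp le_rfl
      have h2 : s.star A / H * H * H⁻¹ ≤ s.star A * H⁻¹ := mul_left_mono (a := H⁻¹) h1
      have h3 : s.star A * H⁻¹ ≤ s.star (A * H⁻¹) := StarOpAux.star_mul_le s hA hHinv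
      have h4 : s.star A / H * (H * H⁻¹) ≤ s.star (A * H⁻¹) := by
        rw [← mul_assoc]; exact h2.trans h3
      have h5 : s.star A / H * s.star (H * H⁻¹) ≤ s.star (s.star A / H * (H * H⁻¹)) := by
        rw [mul_comm (s.star A / H), mul_comm (s.star A / H)]
        exact StarOpAux.star_mul_le s (StarOpAux.mul_ne_zero'_s6 hH hHinv) hX
      have h6 : s.star A / H ≤ s.star (s.star A / H * (H * H⁻¹)) := by
        have := h5
        rw [hinv, mul_one] at this
        exact this
      have h7 : s.star (s.star A / H * (H * H⁻¹)) ≤ s.star (s.star (A * H⁻¹)) :=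
        s.star_mono (StarOpAux.mul_ne_zero'_s6 hX (StarOpAux.mul_ne_zero'_s6 hH hHinv)) h4
      rw [s.star_idem hAHinv] at h7
      exact h6.trans h7
    have e1 : s.star (A / H) = s.star A / H := le_antisymm hc (hd.trans hb)
    exact ⟨e1, le_antisymm hd (hb.trans e1.le)⟩
  · intro h
    obtain ⟨h1, h2⟩ := h H hH
    have hHH : H / H ≠ 0 := StarOpAux.div_ne_zero hH hH
    have hone : (1 : FractionalIdeal (nonZeroDivisors D) K) ≤ H / H := by
      rw [le_div_iff_mul_le hH, one_mul]
    have hge : (1 : FractionalIdeal (nonZeroDivisors D) K) ≤ s.star (H * H⁻¹) := by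
      calc (1 : FractionalIdeal (nonZeroDivisors D) K) = s.star 1 := s.star_one.symm
        _ ≤ s.star (H / H) := s.star_mono one_ne_zero hone
        _ = s.star (H * H⁻¹) := by rw [h1, h2]
    have hle : s.star (H * H⁻¹) ≤ 1 := by
      have : H * H⁻¹ ≤ 1 := mul_one_div_le_one
      calc s.star (H * H⁻¹) ≤ s.star 1 := s.star_mono (StarOpAux.mul_ne_zero'_s6 hH hHinv) this
        _ = 1 := s.star_one
    exact le_antisymm hle hge
end

section
/- If D is a ∗-Prüfer domain, then (AF)⁻¹ = (A⁻¹F⁻¹)^∗ for every nonzero fractional ideal A and every nonzero finitely generated fractional ideal F; moreover this latter property holds if and only if D is a (∗,v)-Prüfer domain. -/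
open FractionalIdeal

variable {D K : Type*} [CommRing D] [IsDomain D] [Field K] [Algebra D K] [IsFractionRing D K]

set_option linter.unusedSectionVars false
set_option linter.unusedVariables false

namespace StarOpAux

lemma mul_ne_zero'_s15 {A B : FractionalIdeal (nonZeroDivisors D) K} (hA : A ≠ 0) (hB : B ≠ 0) :
    A * B ≠ 0 := by
  obtain ⟨a, haA, ha⟩ : ∃ a ∈ A, a ≠ (0 : K) := by
    by_contra h; push_neg at h; exact hA (eq_zero_iff.mpr h)
  obtain ⟨b, hbB, hb⟩ : ∃ b ∈ B, b ≠ (0 : K) := by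
    by_contra h; push_neg at h; exact hB (eq_zero_iff.mpr h)
  intro h
  exact mul_ne_zero ha hb (eq_zero_iff.mp h _ (mul_mem_mul haA hbB))

lemma inv_ne_zero'_s15 {A : FractionalIdeal (nonZeroDivisors D) K} (hA : A ≠ 0) : A⁻¹ ≠ 0 := by
  intro h
  have hmem := den_mem_inv hA
  rw [h] at hmem
  have : (algebraMap D K) (A.den : D) ≠ 0 :=
    IsFractionRing.to_map_ne_zero_of_mem_nonZeroDivisors A.den.2
  exact this (eq_zero_iff.mp rfl _ hmem)

lemma mul_inv_le_one' (A : FractionalIdeal (nonZeroDivisors D) K) : A * A⁻¹ ≤ 1 := by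
  rw [inv_eq]; exact mul_one_div_le_one

lemma star_ne_zero (s : StarOp D K) {A : FractionalIdeal (nonZeroDivisors D) K} (hA : A ≠ 0) :
    s.star A ≠ 0 := by
  intro h
  exact hA (FractionalIdeal.le_zero_iff.mp (h ▸ s.le_star hA))

lemma mul_star_le_s15 (s : StarOp D K) {A B : FractionalIdeal (nonZeroDivisors D) K}
    (hA : A ≠ 0) (hB : B ≠ 0) : A * s.star B ≤ s.star (A * B) := by
  rw [mul_le]
  intro a ha b hb
  rcases eq_or_ne a 0 with rfl | ha0
  · simpa using zero_mem (s.star (A * B))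
  have hspan : spanSingleton (nonZeroDivisors D) a ≤ A := spanSingleton_le_iff_mem.mpr ha
  have h1 : a * b ∈ spanSingleton (nonZeroDivisors D) a * s.star B :=
    mul_mem_mul (mem_spanSingleton_self _ a) hb
  rw [← s.star_smul a ha0 hB] at h1
  have h2 : spanSingleton (nonZeroDivisors D) a * B ≤ A * B :=
    mul_le.mpr fun x hx y hy => mul_mem_mul (hspan hx) hy
  exact s.star_mono (mul_ne_zero'_s15 (spanSingleton_ne_zero_iff.mpr ha0) hB) h2 h1

lemma star_inv (s : StarOp D K) {A : FractionalIdeal (nonZeroDivisors D) K} (hA : A ≠ 0) :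
    s.star A⁻¹ = A⁻¹ := by
  refine le_antisymm ?_ (s.le_star (inv_ne_zero'_s15 hA))
  rw [inv_eq, le_div_iff_mul_le hA]
  calc s.star A⁻¹ * A = A * s.star A⁻¹ := mul_comm _ _
    _ ≤ s.star (A * A⁻¹) := mul_star_le_s15 s hA (inv_ne_zero'_s15 hA)
    _ ≤ s.star 1 := s.star_mono (mul_ne_zero'_s15 hA (inv_ne_zero'_s15 hA)) (mul_inv_le_one' A)
    _ = 1 := s.star_one

/-- The key direction: (∗,v)-Prüfer implies the inverse formula. -/
lemma key (s : StarOp D K)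
    (h : ∀ F : FractionalIdeal (nonZeroDivisors D) K, F ≠ 0 → (F : Submodule D K).FG →
      s.star ((F⁻¹)⁻¹ * F⁻¹) = 1) :
    ∀ (A F : FractionalIdeal (nonZeroDivisors D) K), A ≠ 0 → F ≠ 0 → (F : Submodule D K).FG →
      (A * F)⁻¹ = s.star (A⁻¹ * F⁻¹) := by
  intro A F hA hF hFG
  have hAF : A * F ≠ 0 := mul_ne_zero'_s15 hA hF
  have hFi : F⁻¹ ≠ 0 := inv_ne_zero'_s15 hF
  have hAi : A⁻¹ ≠ 0 := inv_ne_zero'_s15 hA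
  have hFii : (F⁻¹)⁻¹ ≠ 0 := inv_ne_zero'_s15 hFi
  have hAFi : (A * F)⁻¹ ≠ 0 := inv_ne_zero'_s15 hAF
  have hAiFi : A⁻¹ * F⁻¹ ≠ 0 := mul_ne_zero'_s15 hAi hFi
  refine le_antisymm ?_ ?_
  · -- (A*F)⁻¹ ≤ star (A⁻¹ * F⁻¹)
    have h1 : (A * F)⁻¹ * (F⁻¹)⁻¹ ≤ A⁻¹ := by
      rw [inv_eq (I := A), le_div_iff_mul_le hA]
      have h2 : (A * F)⁻¹ * A ≤ F⁻¹ := by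
        rw [inv_eq (I := F), le_div_iff_mul_le hF, mul_assoc, mul_comm]
        exact mul_inv_le_one' (A * F)
      calc (A * F)⁻¹ * (F⁻¹)⁻¹ * A = (A * F)⁻¹ * A * (F⁻¹)⁻¹ := by ring
        _ ≤ F⁻¹ * (F⁻¹)⁻¹ := mul_le.mpr fun x hx y hy =>
            mul_mem_mul (by exact h2 ((mul_comm ((A*F)⁻¹) A ▸ hx : x ∈ (A*F)⁻¹ * A))) hy
        _ ≤ 1 := mul_inv_le_one' F⁻¹
    have h4 : (A * F)⁻¹ * ((F⁻¹)⁻¹ * F⁻¹) ≤ A⁻¹ * F⁻¹ := by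
      rw [← mul_assoc]
      exact mul_le.mpr fun x hx y hy => mul_mem_mul (h1 hx) hy
    calc (A * F)⁻¹ = (A * F)⁻¹ * s.star ((F⁻¹)⁻¹ * F⁻¹) := by rw [h F hF hFG, mul_one]
      _ ≤ s.star ((A * F)⁻¹ * ((F⁻¹)⁻¹ * F⁻¹)) :=
          mul_star_le_s15 s hAFi (mul_ne_zero'_s15 hFii hFi)
      _ ≤ s.star (A⁻¹ * F⁻¹) :=
          s.star_mono (mul_ne_zero'_s15 hAFi (mul_ne_zero'_s15 hFii hFi)) h4
  · -- star (A⁻¹ * F⁻¹) ≤ (A*F)⁻¹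
    have h3 : A⁻¹ * F⁻¹ ≤ (A * F)⁻¹ := by
      rw [inv_eq (I := A * F), le_div_iff_mul_le hAF]
      calc A⁻¹ * F⁻¹ * (A * F) = (A * A⁻¹) * (F * F⁻¹) := by ring
        _ ≤ 1 * 1 := mul_le.mpr fun x hx y hy =>
            mul_mem_mul (mul_inv_le_one' A hx) (mul_inv_le_one' F hy)
        _ = 1 := one_mul 1
    calc s.star (A⁻¹ * F⁻¹) ≤ s.star ((A * F)⁻¹) := s.star_mono hAiFi h3
      _ = (A * F)⁻¹ := star_inv s hAF

end StarOpAux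

open StarOpAux

/-- If `D` is `∗`-Prüfer then `(AF)⁻¹ = (A⁻¹F⁻¹)^∗` for all nonzero `A` and
nonzero finitely generated `F`; moreover this property holds iff `D` is a
`(∗,v)`-Prüfer domain. -/
theorem starPrufer_implies_inv_mul_and_iff_starVPrufer (s : StarOp D K) :
    ((∀ F : FractionalIdeal (nonZeroDivisors D) K, F ≠ 0 → (F : Submodule D K).FG → s.star (F * F⁻¹) = 1) →
      (∀ (A F : FractionalIdeal (nonZeroDivisors D) K), A ≠ 0 → F ≠ 0 → (F : Submodule D K).FG →
        (A * F)⁻¹ = s.star (A⁻¹ * F⁻¹))) ∧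
    ((∀ (A F : FractionalIdeal (nonZeroDivisors D) K), A ≠ 0 → F ≠ 0 → (F : Submodule D K).FG →
        (A * F)⁻¹ = s.star (A⁻¹ * F⁻¹)) ↔
      (∀ F : FractionalIdeal (nonZeroDivisors D) K, F ≠ 0 → (F : Submodule D K).FG →
        s.star ((F⁻¹)⁻¹ * F⁻¹) = 1)) := by
  have hstar_le_one : ∀ {F : FractionalIdeal (nonZeroDivisors D) K}, F ≠ 0 →
      s.star ((F⁻¹)⁻¹ * F⁻¹) ≤ 1 := by
    intro F hF
    have hFi := inv_ne_zero'_s15 hF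
    have hle2 : (F⁻¹)⁻¹ * F⁻¹ ≤ 1 := by
      rw [mul_comm]; exact mul_inv_le_one' F⁻¹
    calc s.star ((F⁻¹)⁻¹ * F⁻¹) ≤ s.star 1 :=
          s.star_mono (mul_ne_zero'_s15 (inv_ne_zero'_s15 hFi) hFi) hle2
      _ = 1 := s.star_one
  constructor
  · intro hP
    apply key s
    intro F hF hFG
    have hFi := inv_ne_zero'_s15 hF
    refine le_antisymm (hstar_le_one hF) ?_
    have hFle : F ≤ (F⁻¹)⁻¹ := by
      rw [inv_eq (I := F⁻¹), le_div_iff_mul_le hFi]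
      exact mul_inv_le_one' F
    have hle1 : F * F⁻¹ ≤ (F⁻¹)⁻¹ * F⁻¹ :=
      mul_le.mpr fun x hx y hy => mul_mem_mul (hFle hx) hy
    calc (1 : FractionalIdeal (nonZeroDivisors D) K) = s.star (F * F⁻¹) := (hP F hF hFG).symm
      _ ≤ s.star ((F⁻¹)⁻¹ * F⁻¹) := s.star_mono (mul_ne_zero'_s15 hF hFi) hle1
  · constructor
    · intro hP F hF hFG
      have hFi := inv_ne_zero'_s15 hF
      have h1 := hP F⁻¹ F hFi hF hFG
      rw [← h1]
      refine le_antisymm (h1 ▸ hstar_le_one hF) ?_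
      rw [inv_eq (I := F⁻¹ * F), le_div_iff_mul_le (mul_ne_zero'_s15 hFi hF), one_mul, mul_comm]
      exact mul_inv_le_one' F
    · exact key s
end
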